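/- Let ρ = Σ_{a=1}^n p_a Π_a and σ = Σ_{k=1}^d s_k |ψ_k⟩⟨ψ_k| with d_HS(ρ,σ) ≤ δ. Then for every a there exists k with |p_a − s_k| ≤ δ, and for every k there exists a with |p_a − s_k| ≤ δ. -/

import Mathlib

open Matrix

noncomputable def Nv {d : ℕ} (v : Fin d → ℂ) : ℝ := ∑ j, Complex.normSq (v j)

lemma Nv_nonneg {d : ℕ} (v : Fin d → ℂ) : 0 ≤ Nv v :=
  Finset.sum_nonneg fun _ _ => Complex.normSq_nonneg _

lemma dot_self_eq_Nv {d : ℕ} (v : Fin d → ℂ) : star v ⬝ᵥ v = (Nv v : ℂ) := by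
  simp only [dotProduct, Pi.star_apply, Nv, Complex.ofReal_sum]
  refine Finset.sum_congr rfl fun j _ => ?_
  rw [Complex.normSq_eq_conj_mul_self]; rfl

lemma sum_dot {d : ℕ} {ι : Type*} [Fintype ι] (f : ι → (Fin d → ℂ)) (v : Fin d → ℂ) :
    (∑ i, f i) ⬝ᵥ v = ∑ i, f i ⬝ᵥ v := by
  simp only [dotProduct, Finset.sum_apply, Finset.sum_mul]
  exact Finset.sum_comm

lemma dot_sum {d : ℕ} {ι : Type*} [Fintype ι] (v : Fin d → ℂ) (f : ι → (Fin d → ℂ)) :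
    v ⬝ᵥ (∑ i, f i) = ∑ i, v ⬝ᵥ f i := by
  simp only [dotProduct, Finset.sum_apply, Finset.mul_sum]
  exact Finset.sum_comm

lemma expansion {d : ℕ} {ι : Type*} [Fintype ι] (z : ι → ℂ) (w : ι → Fin d → ℂ)
    (horth : ∀ i j, i ≠ j → star (w i) ⬝ᵥ w j = 0) :
    Nv (∑ i, z i • w i) = ∑ i, Complex.normSq (z i) * Nv (w i) := by
  have h : star (∑ i, z i • w i) ⬝ᵥ (∑ i, z i • w i)
      = ((∑ i, Complex.normSq (z i) * Nv (w i) : ℝ) : ℂ) := by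
    rw [star_sum]
    rw [sum_dot]
    push_cast
    refine Finset.sum_congr rfl fun i _ => ?_
    rw [dot_sum]
    rw [Finset.sum_eq_single i]
    · rw [star_smul, smul_dotProduct, dotProduct_smul, dot_self_eq_Nv,
        smul_eq_mul, smul_eq_mul, ← mul_assoc, Complex.star_def,
        ← Complex.normSq_eq_conj_mul_self]
    · intro j _ hj
      rw [star_smul, smul_dotProduct, dotProduct_smul, horth i j (Ne.symm hj)]
      simp
    · intro h; exact absurd (Finset.mem_univ i) h
  have := congrArg Complex.re (h.symm.trans (dot_self_eq_Nv _))
  simpa using this.symm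

lemma hs_bound {d : ℕ} (A : Matrix (Fin d) (Fin d) ℂ) (v : Fin d → ℂ) :
    Nv (A *ᵥ v) ≤ (∑ i, ∑ j, Complex.normSq (A i j)) * Nv v := by
  have step : ∀ i : Fin d, Complex.normSq ((A *ᵥ v) i)
      ≤ (∑ j, Complex.normSq (A i j)) * Nv v := by
    intro i
    have h1 : ‖(A *ᵥ v) i‖ ≤ ∑ j, ‖A i j‖ * ‖v j‖ := by
      calc ‖(A *ᵥ v) i‖ ≤ ∑ j, ‖A i j * v j‖ :=
        norm_sum_le (f := fun j => A i j * v j) Finset.univ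
      _ = ∑ j, ‖A i j‖ * ‖v j‖ := by
        simp [_root_.map_mul]
    have h2 : (∑ j, ‖A i j‖ * ‖v j‖) ^ 2
        ≤ (∑ j, ‖A i j‖ ^ 2) * ∑ j, ‖v j‖ ^ 2 :=
      Finset.sum_mul_sq_le_sq_mul_sq _ _ _
    have h0 : (0:ℝ) ≤ ‖(A *ᵥ v) i‖ := norm_nonneg _
    calc Complex.normSq ((A *ᵥ v) i) = ‖(A *ᵥ v) i‖ ^ 2 :=
      (Complex.sq_norm _).symm
    _ ≤ (∑ j, ‖A i j‖ * ‖v j‖) ^ 2 := by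
        apply pow_le_pow_left₀ h0 h1
    _ ≤ (∑ j, ‖A i j‖ ^ 2) * ∑ j, ‖v j‖ ^ 2 := h2
    _ = (∑ j, Complex.normSq (A i j)) * Nv v := by
        simp [Complex.sq_norm, Nv]
  calc Nv (A *ᵥ v) = ∑ i, Complex.normSq ((A *ᵥ v) i) := rfl
  _ ≤ ∑ i, (∑ j, Complex.normSq (A i j)) * Nv v := Finset.sum_le_sum fun i _ => step i
  _ = (∑ i, ∑ j, Complex.normSq (A i j)) * Nv v := by rw [← Finset.sum_mul]

lemma trace_sq {d : ℕ} (A : Matrix (Fin d) (Fin d) ℂ) (hA : A.IsHermitian) :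
    ((A * A).trace).re = ∑ i, ∑ j, Complex.normSq (A i j) := by
  have : (A * A).trace = ((∑ i, ∑ j, Complex.normSq (A i j) : ℝ) : ℂ) := by
    rw [trace]
    push_cast
    refine Finset.sum_congr rfl fun i _ => ?_
    simp only [diag_apply, Matrix.mul_apply]
    refine Finset.sum_congr rfl fun j _ => ?_
    have h := congrArg star (hA.apply i j)
    rw [star_star] at h
    rw [h, Complex.star_def, Complex.mul_conj]
  rw [this, Complex.ofReal_re]

lemma min_bound {ι : Type*} [Fintype ι] (t c : ι → ℝ) (δ C : ℝ) (hδ : 0 ≤ δ)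
    (hc : ∀ i, 0 ≤ c i) (hC : 0 < C) (hsum : ∑ i, c i = C)
    (hle : ∑ i, t i ^ 2 * c i ≤ δ ^ 2 * C) : ∃ i, |t i| ≤ δ := by
  by_contra h
  push_neg at h
  obtain ⟨i₀, hi₀⟩ : ∃ i, 0 < c i := by
    by_contra hc'
    push_neg at hc'
    have : ∑ i, c i ≤ 0 := Finset.sum_nonpos fun i _ => hc' i
    linarith
  have key : δ ^ 2 * C < ∑ i, t i ^ 2 * c i := by
    rw [← hsum, Finset.mul_sum]
    apply Finset.sum_lt_sum
    · intro i _
      have h1 : δ * δ < |t i| * |t i| := mul_self_lt_mul_self hδ (h i)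
      have h2 : δ ^ 2 ≤ t i ^ 2 := by nlinarith [sq_abs (t i)]
      exact mul_le_mul_of_nonneg_right h2 (hc i)
    · refine ⟨i₀, Finset.mem_univ i₀, ?_⟩
      have h1 : δ * δ < |t i₀| * |t i₀| := mul_self_lt_mul_self hδ (h i₀)
      have h2 : δ ^ 2 < t i₀ ^ 2 := by nlinarith [sq_abs (t i₀)]
      exact mul_lt_mul_of_pos_right h2 hi₀
  linarith

lemma completeness {d : ℕ} (ψ : Fin d → (Fin d → ℂ))
    (hψ : ∀ k l, star (ψ k) ⬝ᵥ ψ l = if k = l then 1 else 0) :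
    ∑ k, vecMulVec (ψ k) (star (ψ k)) = 1 := by
  set M : Matrix (Fin d) (Fin d) ℂ := Matrix.of (fun k j => star (ψ k j)) with hM
  have h1 : M * Mᴴ = 1 := by
    ext k l
    simp only [Matrix.mul_apply, conjTranspose_apply, hM, Matrix.of_apply, Matrix.one_apply]
    have := hψ k l
    simp only [dotProduct, Pi.star_apply] at this
    simpa [star_star, Matrix.one_apply] using this
  have h2 : Mᴴ * M = 1 := mul_eq_one_comm.mp h1
  ext i j
  have := congrFun (congrFun h2 i) j
  simp only [Matrix.mul_apply, conjTranspose_apply, hM, Matrix.of_apply, star_star] at this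
  simpa [vecMulVec_apply, Matrix.sum_apply, mul_comm] using this

lemma vecMulVec_mulVec' {d : ℕ} (w u v : Fin d → ℂ) :
    vecMulVec w u *ᵥ v = (u ⬝ᵥ v) • w := by
  ext i
  simp only [mulVec, vecMulVec_apply, dotProduct, Pi.smul_apply, smul_eq_mul, Finset.sum_mul,
    Finset.mul_sum]
  exact Finset.sum_congr rfl fun j _ => by ring

lemma sum_mulVec' {d : ℕ} {ι : Type*} [Fintype ι] (M : ι → Matrix (Fin d) (Fin d) ℂ)
    (v : Fin d → ℂ) : (∑ i, M i) *ᵥ v = ∑ i, M i *ᵥ v := by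
  ext x
  simp only [mulVec, dotProduct, Matrix.sum_apply, Finset.sum_apply, Finset.sum_mul]
  exact Finset.sum_comm

lemma vecMulVec_herm {d : ℕ} (w : Fin d → ℂ) :
    (vecMulVec w (star w))ᴴ = vecMulVec w (star w) := by
  ext i j
  simp [conjTranspose_apply, vecMulVec_apply, mul_comm]

lemma Nv_psi {d : ℕ} (ψ : Fin d → (Fin d → ℂ))
    (hψ : ∀ k l, star (ψ k) ⬝ᵥ ψ l = if k = l then 1 else 0) (k : Fin d) : Nv (ψ k) = 1 := by
  have h := (dot_self_eq_Nv (ψ k)).symm.trans (hψ k k)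
  rw [if_pos rfl] at h
  exact_mod_cast h
open Matrix

theorem stmt_8 (d n : ℕ)
    (P : Fin n → Matrix (Fin d) (Fin d) ℂ)
    (hPh : ∀ a, (P a).IsHermitian)
    (hPo : ∀ a b, P a * P b = if a = b then P a else 0)
    (hP1 : ∑ a, P a = 1)
    (p : Fin n → ℝ) (hpinj : Function.Injective p)
    (ψ : Fin d → (Fin d → ℂ))
    (hψ : ∀ k l, star (ψ k) ⬝ᵥ ψ l = if k = l then 1 else 0)
    (s : Fin d → ℝ)
    (ρ σ : Matrix (Fin d) (Fin d) ℂ)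
    (hρ : ρ = ∑ a, (p a : ℂ) • P a)
    (hσ : σ = ∑ k, (s k : ℂ) • vecMulVec (ψ k) (star (ψ k)))
    (δ : ℝ) (hδ0 : 0 ≤ δ)
    (hdist : Real.sqrt (((ρ - σ) * (ρ - σ)).trace.re) ≤ δ)
    (hPne : ∀ a, P a ≠ 0) :
    (∀ a, ∃ k, |p a - s k| ≤ δ) ∧ (∀ k, ∃ a, |p a - s k| ≤ δ) := by
  set A := ρ - σ with hAdef
  have hρh : ρ.IsHermitian := by
    show ρᴴ = ρ
    rw [hρ]
    simp [Matrix.conjTranspose_sum, Matrix.conjTranspose_smul, Complex.star_def,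
      Complex.conj_ofReal, show ∀ a, (P a)ᴴ = P a from hPh]
  have hσh : σ.IsHermitian := by
    show σᴴ = σ
    rw [hσ]
    simp only [Matrix.conjTranspose_sum, Matrix.conjTranspose_smul, vecMulVec_herm,
      Complex.star_def, Complex.conj_ofReal]
  have hAh : A.IsHermitian := hρh.sub hσh
  set T : ℝ := ∑ i, ∑ j, Complex.normSq (A i j) with hTdef
  have hTnn : 0 ≤ T :=
    Finset.sum_nonneg fun i _ => Finset.sum_nonneg fun j _ => Complex.normSq_nonneg _
  have hT : T ≤ δ ^ 2 := by
    have h1 : Real.sqrt T ≤ δ := by rwa [trace_sq A hAh] at hdist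
    nlinarith [Real.sq_sqrt hTnn, Real.sqrt_nonneg T]
  have hcomp := completeness ψ hψ
  have horthψ : ∀ k l : Fin d, k ≠ l → star (ψ k) ⬝ᵥ ψ l = 0 := fun k l hkl => by
    rw [hψ k l, if_neg hkl]
  constructor
  · -- ∀ a, ∃ k
    intro a
    obtain ⟨i₀, j₀, hij⟩ : ∃ i j, P a i j ≠ 0 := by
      by_contra h
      push_neg at h
      exact hPne a (by ext i j; exact h i j)
    set v : Fin d → ℂ := fun i => P a i j₀ with hv
    have hvne : Complex.normSq (v i₀) > 0 := by
      rw [hv]; exact Complex.normSq_pos.mpr hij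
    have hNv : 0 < Nv v := by
      have := Finset.single_le_sum (f := fun i => Complex.normSq (v i))
        (fun i _ => Complex.normSq_nonneg _) (Finset.mem_univ i₀)
      unfold Nv; linarith
    have hPbv : ∀ b, P b *ᵥ v = if b = a then v else 0 := by
      intro b
      ext i
      have := congrFun (congrFun (hPo b a) i) j₀
      simp only [Matrix.mul_apply] at this
      by_cases hba : b = a
      · simpa [hba, mulVec, dotProduct, hv] using this
      · simp only [if_neg hba] at this ⊢
        simpa [mulVec, dotProduct, hv] using this
    have hρv : ρ *ᵥ v = (p a : ℂ) • v := by
      rw [hρ, sum_mulVec']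
      rw [Finset.sum_eq_single a]
      · rw [smul_mulVec, hPbv a, if_pos rfl]
      · intro b _ hba
        rw [smul_mulVec, hPbv b, if_neg hba, smul_zero]
      · intro h; exact absurd (Finset.mem_univ a) h
    set c : Fin d → ℂ := fun k => star (ψ k) ⬝ᵥ v with hc
    have hvexp : v = ∑ k, c k • ψ k := by
      have h1 : v = (1 : Matrix (Fin d) (Fin d) ℂ) *ᵥ v := by rw [one_mulVec]
      rw [h1, ← hcomp, sum_mulVec']
      exact Finset.sum_congr rfl fun k _ => vecMulVec_mulVec' _ _ _
    have hσv : σ *ᵥ v = ∑ k, ((s k : ℂ) * c k) • ψ k := by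
      rw [hσ, sum_mulVec']
      refine Finset.sum_congr rfl fun k _ => ?_
      rw [smul_mulVec, vecMulVec_mulVec', smul_smul]
    have hAv : A *ᵥ v = ∑ k, ((((p a : ℝ) - s k : ℝ) : ℂ) * c k) • ψ k := by
      rw [hAdef, sub_mulVec, hρv, hσv]
      rw [hvexp, Finset.smul_sum, ← Finset.sum_sub_distrib]
      refine Finset.sum_congr rfl fun k _ => ?_
      rw [smul_smul, ← sub_smul]
      push_cast
      ring_nf
    have hexp := expansion (fun k => (((p a : ℝ) - s k : ℝ) : ℂ) * c k) ψ horthψ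
    rw [← hAv] at hexp
    have hpar := expansion c ψ horthψ
    rw [← hvexp] at hpar
    have hNψ : ∀ k, Nv (ψ k) = 1 := Nv_psi ψ hψ
    have hbound : Nv (A *ᵥ v) ≤ δ ^ 2 * Nv v := by
      calc Nv (A *ᵥ v) ≤ T * Nv v := hs_bound A v
      _ ≤ δ ^ 2 * Nv v := mul_le_mul_of_nonneg_right hT (Nv_nonneg v)
    have hkey : ∑ k, (p a - s k) ^ 2 * Complex.normSq (c k) ≤ δ ^ 2 * Nv v := by
      calc ∑ k, (p a - s k) ^ 2 * Complex.normSq (c k)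
          = ∑ k, Complex.normSq ((((p a : ℝ) - s k : ℝ) : ℂ) * c k) * Nv (ψ k) := by
            refine Finset.sum_congr rfl fun k _ => ?_
            rw [hNψ k, mul_one, Complex.normSq_mul, Complex.normSq_ofReal]
            ring
      _ = Nv (A *ᵥ v) := hexp.symm
      _ ≤ δ ^ 2 * Nv v := hbound
    have hcsum : ∑ k, Complex.normSq (c k) = Nv v := by
      rw [hpar]
      exact Finset.sum_congr rfl fun k _ => by rw [hNψ k, mul_one]
    exact min_bound (fun k => p a - s k) (fun k => Complex.normSq (c k)) δ (Nv v) hδ0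
      (fun k => Complex.normSq_nonneg _) hNv hcsum hkey
  · -- ∀ k, ∃ a
    intro k
    set w : Fin n → (Fin d → ℂ) := fun b => P b *ᵥ ψ k with hw
    have hsumw : ∑ b, w b = ψ k := by
      rw [hw]
      rw [← sum_mulVec', hP1, one_mulVec]
    have horthw : ∀ a b : Fin n, a ≠ b → star (w a) ⬝ᵥ w b = 0 := by
      intro a b hab
      rw [hw]
      rw [star_mulVec, (hPh a), ← dotProduct_mulVec, mulVec_mulVec, hPo a b, if_neg hab,
        zero_mulVec, dotProduct_zero]
    have hσψ : σ *ᵥ ψ k = (s k : ℂ) • ψ k := by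
      rw [hσ, sum_mulVec']
      rw [Finset.sum_eq_single k]
      · rw [smul_mulVec, vecMulVec_mulVec', hψ k k, if_pos rfl, one_smul]
      · intro l _ hlk
        rw [smul_mulVec, vecMulVec_mulVec', hψ l k, if_neg hlk, zero_smul, smul_zero]
      · intro h; exact absurd (Finset.mem_univ k) h
    have hρψ : ρ *ᵥ ψ k = ∑ b, (p b : ℂ) • w b := by
      rw [hρ, sum_mulVec']
      exact Finset.sum_congr rfl fun b _ => smul_mulVec _ _ _
    have hAψ : A *ᵥ ψ k = ∑ b, (((p b - s k : ℝ) : ℂ)) • w b := by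
      rw [hAdef, sub_mulVec, hρψ, hσψ, ← hsumw, Finset.smul_sum, ← Finset.sum_sub_distrib]
      refine Finset.sum_congr rfl fun b _ => ?_
      rw [← sub_smul]
      push_cast
      ring_nf
    have hexp := expansion (fun b => ((p b - s k : ℝ) : ℂ)) w horthw
    rw [← hAψ] at hexp
    have hones := expansion (fun _ : Fin n => (1 : ℂ)) w horthw
    have hones' : ∑ b, Nv (w b) = 1 := by
      have h1 : ∑ b, (1 : ℂ) • w b = ψ k := by
        rw [← hsumw]; exact Finset.sum_congr rfl fun b _ => one_smul _ _
      rw [h1, Nv_psi ψ hψ k] at hones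
      exact (hones.trans (Finset.sum_congr rfl fun b _ => by simp)).symm
    have hbound : Nv (A *ᵥ ψ k) ≤ δ ^ 2 * 1 := by
      calc Nv (A *ᵥ ψ k) ≤ T * Nv (ψ k) := hs_bound A (ψ k)
      _ = T := by rw [Nv_psi ψ hψ k, mul_one]
      _ ≤ δ ^ 2 * 1 := by rw [mul_one]; exact hT
    have hkey : ∑ b, (p b - s k) ^ 2 * Nv (w b) ≤ δ ^ 2 * 1 := by
      calc ∑ b, (p b - s k) ^ 2 * Nv (w b)
          = ∑ b, Complex.normSq (((p b - s k : ℝ) : ℂ)) * Nv (w b) := by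
            refine Finset.sum_congr rfl fun b _ => ?_
            rw [Complex.normSq_ofReal]; ring
      _ = Nv (A *ᵥ ψ k) := hexp.symm
      _ ≤ δ ^ 2 * 1 := hbound
    exact min_bound (fun b => p b - s k) (fun b => Nv (w b)) δ 1 hδ0
      (fun b => Nv_nonneg _) one_pos hones' hkey
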